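/- arXiv:1907.07456 — 2 statements merged into one kernel-verified Lean document; each statement's English description precedes it below -/
import Mathlib

section
/- For a k-vector v in a finite-dimensional real vector space V, the span of v consists exactly of all vectors of the form v ⌟ α (interior product) where α ranges over the (k−1)-covectors on V. -/
open MeasureTheory
noncomputable section

/-- Multivectors (or multicovectors) on `ℝⁿ`, described by their coordinates with
respect to the canonical basis `e_s = e_{s₁} ∧ … ∧ e_{s_k}` (`s` a sorted subset of
indices): a `k`-vector is such a family of coordinates supported on sets of
cardinality `k`. -/
abbrev MV (n : ℕ) := Finset (Fin n) → ℝ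

namespace MV

variable {n : ℕ}

/-- `v` is a `k`-(co)vector: its coordinates are supported on index sets of size `k`. -/
def IsGrade (k : ℕ) (v : MV n) : Prop := ∀ s : Finset (Fin n), s.card ≠ k → v s = 0

/-- the sign of the permutation reordering the concatenation of the (sorted) index
sets `a` and `b`. -/
def sgn (a b : Finset (Fin n)) : ℝ :=
  (-1 : ℝ) ^ ((a ×ˢ b).filter (fun p => p.2 < p.1)).card

/-- exterior (wedge) product of multi(co)vectors. -/
def wedge (v w : MV n) : MV n :=
  fun s => ∑ a ∈ s.powerset, sgn a (s \ a) * v a * w (s \ a)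

/-- interior product `v ⌟ α` of a `k`-vector `v` and an `h`-covector `α` (`h ≤ k`):
the `(k-h)`-vector with `⟨v ⌟ α, β⟩ = ⟨v, α ∧ β⟩` for every `(k-h)`-covector `β`. -/
def lhook (v α : MV n) : MV n :=
  fun b => ∑ a ∈ bᶜ.powerset, sgn a b * α a * v (a ∪ b)

/-- interior product `v ⌞ α` of a `k`-vector `v` and an `h`-covector `α` (`k ≤ h`):
the `(h-k)`-covector with `⟨w, v ⌞ α⟩ = ⟨w ∧ v, α⟩` for every `(h-k)`-vector `w`. -/
def rhook (v α : MV n) : MV n :=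
  fun b => ∑ c ∈ bᶜ.powerset, sgn b c * v c * α (b ∪ c)

/-- duality pairing between multivectors and multicovectors. -/
def pair (v α : MV n) : ℝ := ∑ s : Finset (Fin n), v s * α s

/-- the top multi(co)vector `e₁ ∧ … ∧ eₙ` (resp. `dx₁ ∧ … ∧ dxₙ`). -/
def full : MV n := fun s => if s = Finset.univ then 1 else 0

/-- Hodge-type operator on `k`-vectors: `⋆v := v ⌞ dx`. -/
def hodgeV (v : MV n) : MV n := rhook v full

/-- Hodge-type operator on `k`-covectors: `⋆α := e ⌟ α`. -/
def hodgeC (α : MV n) : MV n := lhook full α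

/-- the `1`-vector (or `1`-covector) with coordinates `u : ℝⁿ`. -/
def vec1 (u : Fin n → ℝ) : MV n := fun s => ∑ j, if s = {j} then u j else 0

/-- the vector in `ℝⁿ` corresponding to a `1`-vector. -/
def toVec (m : MV n) : Fin n → ℝ := fun j => m {j}

/-- the unit `0`-vector. -/
def mvOne : MV n := fun s => if s = ∅ then 1 else 0

/-- the basis multicovector `dx_t` associated with the index set `t`. -/
def dxS (t : Finset (Fin n)) : MV n := fun s => if s = t then 1 else 0

/-- wedge product of a list of multivectors. -/
def wedgeList (l : List (MV n)) : MV n := l.foldr wedge mvOne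

/-- partial derivative `∂v/∂x_j` of a multivectorfield. -/
def pd (v : (Fin n → ℝ) → MV n) (j : Fin n) (x : Fin n → ℝ) : MV n :=
  fderiv ℝ v x (Pi.single j 1)

/-- divergence of a `k`-vectorfield: `div v := Σ_j (∂v/∂x_j) ⌟ dx_j`, a
`(k-1)`-vectorfield. -/
def dvg (v : (Fin n → ℝ) → MV n) (x : Fin n → ℝ) : MV n :=
  ∑ j : Fin n, lhook (pd v j x) (dxS {j})

/-- exterior derivative of an `h`-form: `dω := Σ_j dx_j ∧ ∂ω/∂x_j`. -/
def extd (ω : (Fin n → ℝ) → MV n) (x : Fin n → ℝ) : MV n :=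
  ∑ j : Fin n, wedge (dxS {j}) (pd ω j x)

/-- Lie bracket of two vectorfields. -/
def lie (v w : (Fin n → ℝ) → (Fin n → ℝ)) (x : Fin n → ℝ) : Fin n → ℝ :=
  fderiv ℝ v x (w x) - fderiv ℝ w x (v x)

/-- the simple `k`-vector `w₁ ∧ … ∧ w_k`, in coordinates. -/
def simpleCoeff (k : ℕ) (w : Fin k → (Fin n → ℝ)) : MV n :=
  fun s => if h : s.card = k then
    Matrix.det (Matrix.of fun i j : Fin k => w j ((s.orderIsoOfFin h) i : Fin n))
  else 0

/-- `Λ_k(W)`: the space of `k`-vectors of the subspace `W ⊆ ℝⁿ`, viewed inside the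
space of `k`-vectors of `ℝⁿ`; it is spanned by the simple `k`-vectors of elements
of `W`. -/
def lambdaK (k : ℕ) (W : Submodule ℝ (Fin n → ℝ)) : Submodule ℝ (MV n) :=
  Submodule.span ℝ
    {m : MV n | ∃ w : Fin k → (Fin n → ℝ), (∀ i, w i ∈ W) ∧ m = simpleCoeff k w}

/-- the span of a `k`-vector `v`: the smallest subspace `W` of `ℝⁿ` with
`v ∈ Λ_k(W)`. -/
def spanCoord (k : ℕ) (v : MV n) : Submodule ℝ (Fin n → ℝ) :=
  sInf {W : Submodule ℝ (Fin n → ℝ) | v ∈ lambdaK k W}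

/-- pushforward of a multivector under a linear map `A`. -/
def pushMV (A : (Fin n → ℝ) → (Fin n → ℝ)) (v : MV n) : MV n :=
  fun t => ∑ s : Finset (Fin n),
    if h : s.card = t.card then
      v s * Matrix.det (Matrix.of fun i j : Fin t.card =>
        A (Pi.single ((s.orderIsoOfFin h) j : Fin n) 1) ((t.orderIsoOfFin rfl) i : Fin n))
    else 0

end MV

open MV

namespace MVAux

open Finset MV

variable {n : ℕ}

/-! ### Basic lemmas about `simpleCoeff` -/

theorem simpleCoeff_card_ne {k : ℕ} (w : Fin k → (Fin n → ℝ)) {s : Finset (Fin n)}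
    (h : s.card ≠ k) : simpleCoeff k w s = 0 := by
  rw [simpleCoeff, dif_neg h]

/-- the coordinate of `simpleCoeff` at a set of the right cardinality, as an
alternating map in the tuple of vectors. -/
def altC {k : ℕ} (s : Finset (Fin n)) (h : s.card = k) :
    (Fin n → ℝ) [⋀^Fin k]→ₗ[ℝ] ℝ :=
  Matrix.detRowAlternating.compLinearMap (LinearMap.funLeft ℝ ℝ (s.orderEmbOfFin h))

theorem simpleCoeff_eq_altC {k : ℕ} (w : Fin k → (Fin n → ℝ)) {s : Finset (Fin n)}
    (h : s.card = k) : simpleCoeff k w s = altC s h w := by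
  rw [simpleCoeff, dif_pos h, ← Matrix.det_transpose]
  rfl

theorem simpleCoeff_comp_perm {k : ℕ} (w : Fin k → (Fin n → ℝ)) (π : Equiv.Perm (Fin k)) :
    simpleCoeff k (w ∘ π) = ((Equiv.Perm.sign π : ℤ) : ℝ) • simpleCoeff k w := by
  funext s
  rcases eq_or_ne s.card k with h | h
  · rw [Pi.smul_apply, simpleCoeff_eq_altC _ h, simpleCoeff_eq_altC _ h,
      AlternatingMap.map_perm, Units.smul_def, zsmul_eq_mul, smul_eq_mul]
  · simp [simpleCoeff_card_ne _ h]

theorem simpleCoeff_eq_zero_of_eq {k : ℕ} (w : Fin k → (Fin n → ℝ)) {i i' : Fin k}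
    (hw : w i = w i') (hii : i ≠ i') : simpleCoeff k w = 0 := by
  funext s
  rcases eq_or_ne s.card k with h | h
  · rw [simpleCoeff_eq_altC _ h]
    exact (altC s h).map_eq_zero_of_eq w hw hii
  · exact simpleCoeff_card_ne _ h

theorem simpleCoeff_sum {k : ℕ} (g : Fin k → Fin n → (Fin n → ℝ)) :
    simpleCoeff k (fun i => ∑ r, g i r) =
      ∑ φ : Fin k → Fin n, simpleCoeff k (fun i => g i (φ i)) := by
  funext s
  rw [Finset.sum_apply]
  rcases eq_or_ne s.card k with h | h
  · rw [simpleCoeff_eq_altC _ h]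
    rw [show (altC s h) (fun i => ∑ r, g i r)
        = (altC s h).toMultilinearMap (fun i => ∑ r, g i r) from rfl]
    rw [(altC s h).toMultilinearMap.map_sum g]
    exact Finset.sum_congr rfl fun φ _ => (simpleCoeff_eq_altC _ h).symm
  · simp [simpleCoeff_card_ne _ h]

theorem simpleCoeff_smul_univ {k : ℕ} (c : Fin k → ℝ) (w : Fin k → (Fin n → ℝ)) :
    simpleCoeff k (fun i => c i • w i) = (∏ i, c i) • simpleCoeff k w := by
  funext s
  rcases eq_or_ne s.card k with h | h
  · rw [Pi.smul_apply, simpleCoeff_eq_altC _ h, simpleCoeff_eq_altC _ h, smul_eq_mul]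
    rw [show (altC s h) (fun i => c i • w i)
        = (altC s h).toMultilinearMap (fun i => c i • w i) from rfl]
    rw [(altC s h).toMultilinearMap.map_smul_univ c w]
    rfl
  · simp [simpleCoeff_card_ne _ h]

theorem isGrade_simpleCoeff (k : ℕ) (w : Fin k → (Fin n → ℝ)) :
    IsGrade k (simpleCoeff k w) := fun _ hs => simpleCoeff_card_ne _ hs

/-! ### linearity of `lhook` -/

theorem lhook_add_left (u v α : MV n) : lhook (u + v) α = lhook u α + lhook v α := by
  funext b
  rw [Pi.add_apply, lhook, lhook, lhook, ← Finset.sum_add_distrib]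
  exact Finset.sum_congr rfl fun a _ => by rw [Pi.add_apply]; ring

theorem lhook_smul_left (c : ℝ) (v α : MV n) : lhook (c • v) α = c • lhook v α := by
  funext b
  rw [Pi.smul_apply, lhook, lhook, smul_eq_mul, Finset.mul_sum]
  exact Finset.sum_congr rfl fun a _ => by rw [Pi.smul_apply, smul_eq_mul]; ring

theorem lhook_zero_left (α : MV n) : lhook (0 : MV n) α = 0 := by
  funext b; simp [lhook]

theorem lhook_add_right (v α β : MV n) : lhook v (α + β) = lhook v α + lhook v β := by
  funext b
  rw [Pi.add_apply, lhook, lhook, lhook, ← Finset.sum_add_distrib]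
  exact Finset.sum_congr rfl fun a _ => by rw [Pi.add_apply]; ring

theorem lhook_smul_right (c : ℝ) (v α : MV n) : lhook v (c • α) = c • lhook v α := by
  funext b
  rw [Pi.smul_apply, lhook, lhook, smul_eq_mul, Finset.mul_sum]
  exact Finset.sum_congr rfl fun a _ => by rw [Pi.smul_apply, smul_eq_mul]; ring

theorem lhook_zero_right (v : MV n) : lhook v (0 : MV n) = 0 := by
  funext b; simp [lhook]

theorem isGrade_zero (k : ℕ) : IsGrade k (0 : MV n) := fun _ _ => rfl

theorem isGrade_add {k : ℕ} {α β : MV n} (hα : IsGrade k α) (hβ : IsGrade k β) :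
    IsGrade k (α + β) := fun s hs => by rw [Pi.add_apply, hα s hs, hβ s hs, add_zero]

theorem isGrade_smul {k : ℕ} (c : ℝ) {α : MV n} (hα : IsGrade k α) :
    IsGrade k (c • α) := fun s hs => by rw [Pi.smul_apply, hα s hs, smul_zero]

/-! ### the coordinate formula for `toVec (lhook m α)` -/

theorem toVec_lhook (m α : MV n) :
    toVec (lhook m α) = fun j => ∑ a : Finset (Fin n),
      α a * (if j ∈ a then 0 else sgn a {j} * m (insert j a)) := by
  funext j
  rw [toVec, lhook]
  rw [show ({j} : Finset (Fin n))ᶜ.powerset = Finset.univ.filter (fun a => j ∉ a) from ?_]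
  · rw [Finset.sum_filter]
    refine Finset.sum_congr rfl fun a _ => ?_
    by_cases hj : j ∈ a
    · simp [hj]
    · rw [if_pos hj, if_neg hj,
        show a ∪ {j} = insert j a from by rw [Finset.union_comm, ← Finset.insert_eq]]
      ring
  · ext a
    simp only [Finset.mem_powerset, Finset.mem_filter, Finset.mem_univ, true_and]
    constructor
    · intro h hj
      have := h hj
      rw [Finset.mem_compl] at this
      exact this (Finset.mem_singleton_self j)
    · intro hj x hx
      rw [Finset.mem_compl, Finset.mem_singleton]
      rintro rfl
      exact hj hx

/-! ### order embeddings of erased sets -/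

theorem orderEmb_congr {K : ℕ} {s t : Finset (Fin n)} (hst : s = t) (hs : s.card = K)
    (ht : t.card = K) (x : Fin K) : s.orderEmbOfFin hs x = t.orderEmbOfFin ht x := by
  subst hst; rfl

theorem orderEmb_erase {K : ℕ} {s : Finset (Fin n)} (hs : s.card = K + 1) {j : Fin n}
    (hj : j ∈ s) {p : Fin (K + 1)} (hp : s.orderEmbOfFin hs p = j) {t : Finset (Fin n)}
    (hts : t = s.erase j) (ht : t.card = K) (i : Fin K) :
    s.orderEmbOfFin hs (p.succAbove i) = t.orderEmbOfFin ht i := by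
  subst hts
  have hmem : ∀ x : Fin K, s.orderEmbOfFin hs (p.succAbove x) ∈ s.erase j := by
    intro x
    refine Finset.mem_erase.2 ⟨?_, Finset.orderEmbOfFin_mem _ _ _⟩
    rw [← hp]
    intro hcon
    exact p.succAbove_ne x ((s.orderEmbOfFin hs).injective hcon)
  have hmono : StrictMono fun x : Fin K => s.orderEmbOfFin hs (p.succAbove x) :=
    (s.orderEmbOfFin hs).strictMono.comp (Fin.strictMono_succAbove p)
  exact congrFun (Finset.orderEmbOfFin_unique ht hmem hmono) i

theorem orderEmb_position {K : ℕ} {s : Finset (Fin n)} (hs : s.card = K + 1) {j : Fin n}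
    {p : Fin (K + 1)} (hp : s.orderEmbOfFin hs p = j) :
    (p : ℕ) = (s.filter (· < j)).card := by
  have himg : s.filter (· < j)
      = (Finset.univ.filter (· < p)).image (s.orderEmbOfFin hs) := by
    ext x
    simp only [Finset.mem_filter, Finset.mem_image, Finset.mem_univ, true_and]
    constructor
    · rintro ⟨hxs, hxj⟩
      have hxr : x ∈ Set.range (s.orderEmbOfFin hs) := by
        rw [Finset.range_orderEmbOfFin]; exact hxs
      obtain ⟨i, hi⟩ := hxr
      refine ⟨i, ?_, hi⟩
      rw [← (s.orderEmbOfFin hs).lt_iff_lt, hi, hp]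
      exact hxj
    · rintro ⟨i, hip, rfl⟩
      refine ⟨Finset.orderEmbOfFin_mem _ _ _, ?_⟩
      rw [← hp]
      exact (s.orderEmbOfFin hs).strictMono hip
  rw [himg, Finset.card_image_of_injective _ (s.orderEmbOfFin hs).injective]
  rw [show Finset.univ.filter (· < p) = Finset.Iio p from by ext i; simp]
  rw [Fin.card_Iio]

/-! ### `sgn` of a singleton -/

theorem sgn_singleton (a : Finset (Fin n)) (j : Fin n) :
    sgn a {j} = (-1 : ℝ) ^ (a.filter (fun x => j < x)).card := by
  rw [sgn]
  congr 1
  rw [show (a ×ˢ ({j} : Finset (Fin n))).filter (fun p => p.2 < p.1)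
      = (a.filter (fun x => j < x)) ×ˢ {j} from ?_]
  · rw [Finset.card_product, Finset.card_singleton, mul_one]
  · ext ⟨x, y⟩
    simp only [Finset.mem_filter, Finset.mem_product, Finset.mem_singleton]
    constructor
    · rintro ⟨⟨hx, rfl⟩, h⟩; exact ⟨⟨hx, h⟩, rfl⟩
    · rintro ⟨⟨hx, h⟩, rfl⟩; exact ⟨⟨hx, rfl⟩, h⟩

theorem filter_lt_add_filter_gt {a : Finset (Fin n)} {j : Fin n} (hj : j ∉ a) :
    (a.filter (· < j)).card + (a.filter (fun x => j < x)).card = a.card := by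
  rw [← Finset.card_filter_add_card_filter_not (s := a) (p := (· < j))]
  congr 1
  refine congrArg Finset.card (Finset.filter_congr fun x hx => ?_)
  constructor
  · intro h; exact not_lt.2 (le_of_lt h)
  · intro h; exact lt_of_le_of_ne (not_lt.1 h) (fun he => hj (by rw [he]; exact hx))

/-! ### the Laplace-expansion identity -/

theorem crux {K : ℕ} {a : Finset (Fin n)} (ha : a.card = K) (w : Fin (K + 1) → (Fin n → ℝ))
    (j : Fin n) :
    (if j ∈ a then 0 else sgn a {j} * simpleCoeff (K + 1) w (insert j a)) =
      ∑ i : Fin (K + 1),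
        ((-1 : ℝ) ^ (K + (i : ℕ)) * simpleCoeff K (w ∘ i.succAbove) a) * w i j := by
  classical
  set minor : Fin (K + 1) → Matrix (Fin K) (Fin K) ℝ :=
    fun i => Matrix.of fun r c => w (i.succAbove r) (a.orderEmbOfFin ha c) with hminor_def
  have hminor : ∀ i, simpleCoeff K (w ∘ i.succAbove) a = (minor i).det := by
    intro i
    rw [simpleCoeff, dif_pos ha, ← Matrix.det_transpose (minor i)]
    congr 1
  have hr : ∑ i : Fin (K + 1),
      ((-1 : ℝ) ^ (K + (i : ℕ)) * simpleCoeff K (w ∘ i.succAbove) a) * w i j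
      = ∑ i : Fin (K + 1), (-1 : ℝ) ^ ((i : ℕ) + K) * w i j * (minor i).det :=
    Finset.sum_congr rfl fun i _ => by rw [hminor, Nat.add_comm K (i : ℕ)]; ring
  by_cases hj : j ∈ a
  · rw [if_pos hj, hr]
    set q : Fin K := (a.orderIsoOfFin ha).symm ⟨j, hj⟩ with hq_def
    have hq : a.orderEmbOfFin ha q = j :=
      congrArg Subtype.val ((a.orderIsoOfFin ha).apply_symm_apply ⟨j, hj⟩)
    set colf : Fin (K + 1) → Fin n :=
      fun c => if hc : c = Fin.last K then j else a.orderEmbOfFin ha (c.castPred hc)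
      with hcolf_def
    have hc1 : ∀ c : Fin K, colf c.castSucc = a.orderEmbOfFin ha c := by
      intro c
      rw [hcolf_def]
      simp only
      rw [dif_neg ((Fin.castSucc_lt_last c).ne)]
      congr 1
    have hlast : colf (Fin.last K) = j := by simp [hcolf_def]
    have hN : Matrix.det (Matrix.of fun i c => w i (colf c))
        = ∑ i : Fin (K + 1), (-1 : ℝ) ^ ((i : ℕ) + K) * w i j * (minor i).det := by
      rw [Matrix.det_succ_column _ (Fin.last K)]
      refine Finset.sum_congr rfl fun i _ => ?_
      have h2 : (Matrix.of fun i c => w i (colf c)).submatrix i.succAbove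
          (Fin.last K).succAbove = minor i := by
        ext r c
        simp only [Matrix.submatrix_apply, Matrix.of_apply, Fin.succAbove_last, hminor_def]
        exact congrArg (w _) (hc1 c)
      rw [h2]
      simp only [Matrix.of_apply, Fin.val_last, hlast]
    have hzero : Matrix.det (Matrix.of fun i c => w i (colf c)) = 0 := by
      apply Matrix.det_zero_of_column_eq (i := q.castSucc) (j := Fin.last K)
        ((Fin.castSucc_lt_last q).ne)
      intro r
      simp only [Matrix.of_apply]
      rw [hc1 q, hq, hlast]
    rw [← hN, hzero]
  · rw [if_neg hj, hr]
    have hs : (insert j a).card = K + 1 := by rw [Finset.card_insert_of_notMem hj, ha]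
    have hjs : j ∈ insert j a := Finset.mem_insert_self j a
    set p : Fin (K + 1) := ((insert j a).orderIsoOfFin hs).symm ⟨j, hjs⟩ with hp_def
    have hp : (insert j a).orderEmbOfFin hs p = j :=
      congrArg Subtype.val (((insert j a).orderIsoOfFin hs).apply_symm_apply ⟨j, hjs⟩)
    have hsimp : simpleCoeff (K + 1) w (insert j a)
        = Matrix.det (Matrix.of fun i c => w i ((insert j a).orderEmbOfFin hs c)) := by
      rw [simpleCoeff, dif_pos hs,
        ← Matrix.det_transpose (Matrix.of fun i c => w i ((insert j a).orderEmbOfFin hs c))]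
      congr 1
    rw [hsimp, Matrix.det_succ_column _ p, Finset.mul_sum]
    refine Finset.sum_congr rfl fun i _ => ?_
    have hsub : (Matrix.of fun i c => w i ((insert j a).orderEmbOfFin hs c)).submatrix
        i.succAbove p.succAbove = minor i := by
      ext r c
      simp only [Matrix.submatrix_apply, Matrix.of_apply, hminor_def]
      exact congrArg (w _) (orderEmb_erase hs hjs hp (Finset.erase_insert hj).symm ha c)
    rw [hsub]
    simp only [Matrix.of_apply, hp]
    have hcount : (p : ℕ) + (a.filter (fun x => j < x)).card = K := by
      have h1 : (p : ℕ) = ((insert j a).filter (· < j)).card := orderEmb_position hs hp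
      have h2 : (insert j a).filter (· < j) = a.filter (· < j) := by
        rw [Finset.filter_insert, if_neg (lt_irrefl j)]
      have h3 := filter_lt_add_filter_gt hj
      rw [ha] at h3
      rw [h2] at h1
      omega
    rw [sgn_singleton]
    have hpow : (-1 : ℝ) ^ (a.filter (fun x => j < x)).card * (-1) ^ ((i : ℕ) + (p : ℕ))
        = (-1) ^ ((i : ℕ) + K) := by
      rw [← pow_add]
      congr 1
      omega
    calc (-1 : ℝ) ^ (a.filter (fun x => j < x)).card
          * ((-1) ^ ((i : ℕ) + (p : ℕ)) * w i j * (minor i).det)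
        = ((-1 : ℝ) ^ (a.filter (fun x => j < x)).card * (-1) ^ ((i : ℕ) + (p : ℕ)))
          * (w i j * (minor i).det) := by ring
      _ = (-1 : ℝ) ^ ((i : ℕ) + K) * w i j * (minor i).det := by rw [hpow]; ring

/-! ### grouping injective tuples by image and permutation -/

def imgOf {K : ℕ} (φ : Fin K → Fin n) : Finset (Fin n) := Finset.image φ Finset.univ

theorem imgOf_card {K : ℕ} {φ : Fin K → Fin n} (hφ : Function.Injective φ) :
    (imgOf φ).card = K := by
  rw [imgOf, Finset.card_image_of_injective _ hφ, Finset.card_univ, Fintype.card_fin]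

theorem mem_imgOf {K : ℕ} (φ : Fin K → Fin n) (i : Fin K) : φ i ∈ imgOf φ :=
  Finset.mem_image_of_mem _ (Finset.mem_univ i)

def permOf {K : ℕ} (φ : Fin K → Fin n) (hφ : Function.Injective φ) : Equiv.Perm (Fin K) :=
  Equiv.ofBijective
    (fun i => ((imgOf φ).orderIsoOfFin (imgOf_card hφ)).symm ⟨φ i, mem_imgOf φ i⟩)
    (Finite.injective_iff_bijective.1 (by
      intro i i' h
      apply hφ
      have := congrArg (fun t => (((imgOf φ).orderIsoOfFin (imgOf_card hφ)) t : Fin n)) h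
      simpa using this))

theorem permOf_spec {K : ℕ} (φ : Fin K → Fin n) (hφ : Function.Injective φ) (i : Fin K) :
    (imgOf φ).orderEmbOfFin (imgOf_card hφ) (permOf φ hφ i) = φ i := by
  rw [permOf, Equiv.ofBijective_apply]
  exact congrArg Subtype.val (((imgOf φ).orderIsoOfFin (imgOf_card hφ)).apply_symm_apply
    ⟨φ i, mem_imgOf φ i⟩)

theorem embPerm_inj {K : ℕ} (s : Finset (Fin n)) (hs : s.card = K) (π : Equiv.Perm (Fin K)) :
    Function.Injective (fun i => s.orderEmbOfFin hs (π i)) :=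
  fun _ _ h => π.injective ((s.orderEmbOfFin hs).injective h)

theorem imgOf_embPerm {K : ℕ} (s : Finset (Fin n)) (hs : s.card = K) (π : Equiv.Perm (Fin K)) :
    imgOf (fun i => s.orderEmbOfFin hs (π i)) = s := by
  ext x
  simp only [imgOf, Finset.mem_image, Finset.mem_univ, true_and]
  constructor
  · rintro ⟨i, rfl⟩; exact Finset.orderEmbOfFin_mem _ _ _
  · intro hx
    refine ⟨π.symm ((s.orderIsoOfFin hs).symm ⟨x, hx⟩), ?_⟩
    rw [Equiv.apply_symm_apply]
    exact congrArg Subtype.val ((s.orderIsoOfFin hs).apply_symm_apply ⟨x, hx⟩)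

theorem permOf_embPerm {K : ℕ} (s : Finset (Fin n)) (hs : s.card = K) (π : Equiv.Perm (Fin K))
    (hinj : Function.Injective (fun i => s.orderEmbOfFin hs (π i))) :
    permOf (fun i => s.orderEmbOfFin hs (π i)) hinj = π := by
  apply Equiv.ext
  intro i
  apply (s.orderEmbOfFin hs).injective
  rw [← orderEmb_congr (imgOf_embPerm s hs π) (imgOf_card hinj) hs]
  exact permOf_spec _ hinj i

theorem sum_inj_group {K : ℕ} (Fφ : (Fin K → Fin n) → ℝ) :
    ∑ φ ∈ Finset.univ.filter (fun φ : Fin K → Fin n => Function.Injective φ), Fφ φ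
      = ∑ sp : {s : Finset (Fin n) // s.card = K} × Equiv.Perm (Fin K),
          Fφ (fun i => sp.1.1.orderEmbOfFin sp.1.2 (sp.2 i)) := by
  refine Finset.sum_bij'
    (fun φ hφ => (⟨imgOf φ, imgOf_card ((Finset.mem_filter.1 hφ).2)⟩,
      permOf φ ((Finset.mem_filter.1 hφ).2)))
    (fun sp _ => fun i => sp.1.1.orderEmbOfFin sp.1.2 (sp.2 i))
    (fun φ hφ => Finset.mem_univ _)
    (fun sp _ => Finset.mem_filter.2 ⟨Finset.mem_univ _, embPerm_inj _ _ _⟩)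
    (fun φ hφ => funext fun i => permOf_spec φ ((Finset.mem_filter.1 hφ).2) i)
    (fun sp _ => ?_)
    (fun φ hφ => congrArg Fφ (funext fun i =>
      (permOf_spec φ ((Finset.mem_filter.1 hφ).2) i).symm))
  obtain ⟨⟨s, hs⟩, π⟩ := sp
  refine Prod.ext ?_ ?_
  · exact Subtype.ext (imgOf_embPerm s hs π)
  · exact permOf_embPerm s hs π (embPerm_inj s hs π)

/-! ### the pairing of two simple multivectors is a determinant (Cauchy–Binet) -/

theorem pair_simple {K : ℕ} (u z : Fin K → (Fin n → ℝ)) :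
    pair (simpleCoeff K u) (simpleCoeff K z) =
      Matrix.det (Matrix.of fun i j : Fin K => ∑ l, u i l * z j l) := by
  classical
  set Fφ : (Fin K → Fin n) → ℝ := fun φ => (∏ i, u i (φ i)) *
    Matrix.det (Matrix.of fun i j : Fin K => z j (φ i)) with hFφ
  have h1 : Matrix.det (Matrix.of fun i j : Fin K => ∑ l, u i l * z j l)
      = ∑ φ : Fin K → Fin n, Fφ φ := by
    have hrow : (Matrix.of fun i j : Fin K => ∑ l, u i l * z j l)
        = fun i => ∑ l : Fin n, u i l • (fun j => z j l) := by
      funext i j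
      rw [Finset.sum_apply]
      simp
    rw [show Matrix.det (Matrix.of fun i j : Fin K => ∑ l, u i l * z j l)
        = Matrix.detRowAlternating.toMultilinearMap
            (fun i : Fin K => ∑ l : Fin n, u i l • (fun j => z j l)) from by rw [← hrow]; rfl]
    rw [Matrix.detRowAlternating.toMultilinearMap.map_sum
      (fun (i : Fin K) (l : Fin n) => u i l • (fun j : Fin K => z j l))]
    refine Finset.sum_congr rfl fun φ _ => ?_
    rw [Matrix.detRowAlternating.toMultilinearMap.map_smul_univ
      (fun i => u i (φ i)) (fun i => fun j => z j (φ i))]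
    rw [smul_eq_mul]
    rfl
  have h0 : ∀ φ : Fin K → Fin n, ¬Function.Injective φ → Fφ φ = 0 := by
    intro φ hφ
    obtain ⟨i, i', hii', hne⟩ := Function.not_injective_iff.1 hφ
    have : Matrix.det (Matrix.of fun i j : Fin K => z j (φ i)) = 0 :=
      Matrix.det_zero_of_row_eq hne (by funext j; simp only [Matrix.of_apply, hii'])
    rw [hFφ]
    simp only
    rw [this, mul_zero]
  have hper : ∀ (s : Finset (Fin n)) (hs : s.card = K),
      simpleCoeff K u s * simpleCoeff K z s
        = ∑ π : Equiv.Perm (Fin K), Fφ (fun i => s.orderEmbOfFin hs (π i)) := by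
    intro s hs
    have hz : simpleCoeff K z s
        = Matrix.detRowAlternating (fun i : Fin K => (fun j : Fin K => z j (s.orderEmbOfFin hs i))) := by
      rw [simpleCoeff, dif_pos hs]
      rfl
    have hdetz : ∀ π : Equiv.Perm (Fin K),
        Matrix.det (Matrix.of fun i j : Fin K => z j (s.orderEmbOfFin hs (π i)))
          = ((Equiv.Perm.sign π : ℤ) : ℝ) * simpleCoeff K z s := by
      intro π
      calc Matrix.det (Matrix.of fun i j : Fin K => z j (s.orderEmbOfFin hs (π i)))
          = Matrix.detRowAlternating
            ((fun i : Fin K => (fun j : Fin K => z j (s.orderEmbOfFin hs i))) ∘ π) := rfl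
        _ = Equiv.Perm.sign π • Matrix.detRowAlternating
            (fun i : Fin K => (fun j : Fin K => z j (s.orderEmbOfFin hs i))) :=
          Matrix.detRowAlternating.map_perm
            (fun i : Fin K => (fun j : Fin K => z j (s.orderEmbOfFin hs i))) π
        _ = ((Equiv.Perm.sign π : ℤ) : ℝ) * simpleCoeff K z s := by
          rw [Units.smul_def, zsmul_eq_mul, hz]
    have hu : simpleCoeff K u s
        = ∑ π : Equiv.Perm (Fin K),
            ((Equiv.Perm.sign π : ℤ) : ℝ) * ∏ i, u i (s.orderEmbOfFin hs (π i)) := by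
      rw [simpleCoeff, dif_pos hs, Matrix.det_apply']
      rfl
    rw [hu, Finset.sum_mul]
    refine Finset.sum_congr rfl fun π _ => ?_
    rw [hFφ]
    simp only
    rw [hdetz π]
    have hsq : ((Equiv.Perm.sign π : ℤ) : ℝ) * ((Equiv.Perm.sign π : ℤ) : ℝ) = 1 := by
      rcases Int.units_eq_one_or (Equiv.Perm.sign π) with h | h <;> rw [h] <;> norm_num
    calc (((Equiv.Perm.sign π : ℤ) : ℝ) * ∏ i, u i (s.orderEmbOfFin hs (π i))) * simpleCoeff K z s
        = (∏ i, u i (s.orderEmbOfFin hs (π i)))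
          * (((Equiv.Perm.sign π : ℤ) : ℝ) * simpleCoeff K z s) := by ring
      _ = _ := by rw [← hdetz π]
  rw [pair, h1]
  rw [← Finset.sum_filter_add_sum_filter_not Finset.univ
      (fun φ : Fin K → Fin n => Function.Injective φ) Fφ]
  rw [show ∑ φ ∈ Finset.univ.filter
        (fun φ : Fin K → Fin n => ¬ Function.Injective φ), Fφ φ = 0 from
    Finset.sum_eq_zero fun φ hφ => h0 φ (by simpa using (Finset.mem_filter.1 hφ).2), add_zero]
  rw [sum_inj_group Fφ]
  rw [← Finset.sum_filter_of_ne (s := Finset.univ)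
    (p := fun s : Finset (Fin n) => s.card = K)
    (f := fun s => simpleCoeff K u s * simpleCoeff K z s)
    (fun s _ hne => by
      by_contra hc
      exact hne (show simpleCoeff K u s * simpleCoeff K z s = 0 by
        rw [simpleCoeff_card_ne u hc, zero_mul]))]
  rw [Finset.sum_subtype (Finset.univ.filter (fun s : Finset (Fin n) => s.card = K))
    (p := fun s : Finset (Fin n) => s.card = K) (by intro x; simp)
    (fun s => simpleCoeff K u s * simpleCoeff K z s)]
  rw [Fintype.sum_prod_type]
  exact Finset.sum_congr rfl fun ⟨s, hs⟩ _ => hper s hs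

/-! ### determinant of a 0-1 "delta" matrix -/

theorem det_delta {K : ℕ} {τ τ' : Finset (Fin n)} (hτ : τ.card = K) (hτ' : τ'.card = K) :
    Matrix.det (Matrix.of fun i j : Fin K =>
        if τ'.orderEmbOfFin hτ' j = τ.orderEmbOfFin hτ i then (1 : ℝ) else 0)
      = if τ = τ' then 1 else 0 := by
  rcases eq_or_ne τ τ' with rfl | hne
  · rw [if_pos rfl]
    rw [show (Matrix.of fun i j : Fin K =>
        if τ.orderEmbOfFin hτ' j = τ.orderEmbOfFin hτ i then (1 : ℝ) else 0)
        = (1 : Matrix (Fin K) (Fin K) ℝ) from ?_]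
    · exact Matrix.det_one
    · ext i j
      rw [Matrix.of_apply, Matrix.one_apply]
      congr 1
      rw [eq_iff_iff]
      constructor
      · intro h
        exact ((τ.orderEmbOfFin hτ).injective
          ((orderEmb_congr rfl hτ' hτ j).symm.trans h)).symm
      · rintro rfl
        exact orderEmb_congr rfl hτ' hτ i
  · rw [if_neg hne]
    have hsub : ¬ τ ⊆ τ' := fun hsub => hne (Finset.eq_of_subset_of_card_le hsub (by rw [hτ, hτ']))
    obtain ⟨x, hxτ, hxτ'⟩ := Finset.not_subset.1 hsub
    have hxr : x ∈ Set.range (τ.orderEmbOfFin hτ) := by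
      rw [Finset.range_orderEmbOfFin]; exact hxτ
    obtain ⟨i₁, hi₁⟩ := hxr
    refine Matrix.det_eq_zero_of_row_eq_zero i₁ fun j => ?_
    rw [Matrix.of_apply, hi₁, if_neg]
    intro hcon
    exact hxτ' (hcon ▸ Finset.orderEmbOfFin_mem _ _ _)

/-! ### basis coordinate multivectors are simple -/

theorem dxS_eq_simpleCoeff {k : ℕ} {s : Finset (Fin n)} (hs : s.card = k) :
    dxS s = simpleCoeff k (fun i => Pi.single (s.orderEmbOfFin hs i) 1) := by
  funext t
  rcases eq_or_ne t.card k with ht | ht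
  · rw [simpleCoeff, dif_pos ht, dxS]
    rcases eq_or_ne t s with rfl | hts
    · rw [if_pos rfl]
      have hid : (Matrix.of fun i j : Fin k =>
          (Pi.single (t.orderEmbOfFin hs j) (1 : ℝ) : Fin n → ℝ) ((t.orderIsoOfFin ht) i : Fin n))
          = (1 : Matrix (Fin k) (Fin k) ℝ) := by
        ext i j
        rw [Matrix.of_apply, Matrix.one_apply, Pi.single_apply]
        rw [show ((t.orderIsoOfFin ht) i : Fin n) = t.orderEmbOfFin ht i from rfl]
        congr 1
        rw [eq_iff_iff]
        constructor
        · intro h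
          exact (t.orderEmbOfFin ht).injective
            (h.trans (orderEmb_congr rfl hs ht j))
        · rintro rfl
          exact orderEmb_congr rfl ht hs i
      rw [hid, Matrix.det_one]
    · rw [if_neg hts]
      have hsub : ¬ t ⊆ s := fun hsub =>
        hts (Finset.eq_of_subset_of_card_le hsub (by rw [hs, ht]))
      obtain ⟨x, hxt, hxs⟩ := Finset.not_subset.1 hsub
      have hxr : x ∈ Set.range (t.orderEmbOfFin ht) := by
        rw [Finset.range_orderEmbOfFin]; exact hxt
      obtain ⟨r, hr⟩ := hxr
      refine (Matrix.det_eq_zero_of_row_eq_zero r fun c => ?_).symm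
      rw [Matrix.of_apply]
      rw [show ((t.orderIsoOfFin ht) r : Fin n) = x from hr]
      rw [Pi.single_apply, if_neg]
      intro hcon
      exact hxs (hcon ▸ Finset.orderEmbOfFin_mem _ _ _)
  · rw [simpleCoeff_card_ne _ ht, dxS, if_neg]
    rintro rfl
    exact ht hs

/-- basis wedge multivectors -/
def bF (k : ℕ) (b : Module.Basis (Fin n) ℝ (Fin n → ℝ)) (σ : Finset (Fin n)) : MV n :=
  if h : σ.card = k then simpleCoeff k (fun i => b (σ.orderEmbOfFin h i)) else 0

/-! ### expansion of a graded multivector in the wedge products of a basis -/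

theorem mem_span_basis_wedges {k : ℕ} (b : Module.Basis (Fin n) ℝ (Fin n → ℝ)) {v : MV n}
    (hv : IsGrade k v) :
    ∃ c : Finset (Fin n) → ℝ,
      ∑ σ : Finset (Fin n), c σ • MVAux.bF k b σ = v := by
  classical
  set F : Finset (Fin n) → MV n := bF k b with hF
  suffices h : v ∈ Submodule.span ℝ (Set.range F) by
    obtain ⟨c, hc⟩ := Submodule.mem_span_range_iff_exists_fun ℝ |>.1 h
    exact ⟨c, hc⟩
  have hEXP : ∀ w : Fin k → (Fin n → ℝ), simpleCoeff k w ∈ Submodule.span ℝ (Set.range F) := by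
    intro w
    have hw : w = fun i => ∑ r : Fin n, (b.repr (w i) r) • b r :=
      funext fun i => (b.sum_repr (w i)).symm
    rw [hw, simpleCoeff_sum (fun i r => (b.repr (w i) r) • b r)]
    apply Submodule.sum_mem
    intro φ _
    rw [show (fun i => (b.repr (w i) (φ i)) • b (φ i))
        = fun i => (fun i => b.repr (w i) (φ i)) i • (fun i => b (φ i)) i from rfl]
    rw [simpleCoeff_smul_univ]
    apply Submodule.smul_mem
    by_cases hφ : Function.Injective φ
    · have hfac : (fun i => b (φ i))
          = (fun i => b ((imgOf φ).orderEmbOfFin (imgOf_card hφ) i)) ∘ (permOf φ hφ) := by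
        funext i
        exact congrArg b (permOf_spec φ hφ i).symm
      rw [hfac, simpleCoeff_comp_perm]
      apply Submodule.smul_mem
      apply Submodule.subset_span
      exact ⟨imgOf φ, by rw [hF]; simp only [bF]; rw [dif_pos (imgOf_card hφ)]⟩
    · obtain ⟨i, i', hii', hne⟩ := Function.not_injective_iff.1 hφ
      rw [simpleCoeff_eq_zero_of_eq (fun i => b (φ i)) (congrArg b hii') hne]
      exact Submodule.zero_mem _
  have hdx : v = ∑ s ∈ Finset.univ.filter (fun s : Finset (Fin n) => s.card = k),
      v s • dxS s := by
    funext t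
    rw [Finset.sum_apply]
    by_cases htc : t.card = k
    · rw [Finset.sum_eq_single_of_mem t
        (Finset.mem_filter.2 ⟨Finset.mem_univ _, htc⟩)]
      · rw [Pi.smul_apply, dxS, if_pos rfl, smul_eq_mul, mul_one]
      · intro s _ hst
        rw [Pi.smul_apply, dxS, if_neg (Ne.symm hst), smul_zero]
    · rw [hv t htc]
      refine (Finset.sum_eq_zero fun s hsm => ?_).symm
      have : t ≠ s := by
        rintro rfl
        exact htc (Finset.mem_filter.1 hsm).2
      rw [Pi.smul_apply, dxS, if_neg this, smul_zero]
  rw [hdx]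
  apply Submodule.sum_mem
  intro s hsm
  apply Submodule.smul_mem
  rw [dxS_eq_simpleCoeff (Finset.mem_filter.1 hsm).2]
  exact hEXP _

/-! ### the interior product of `Λₖ W` with a grade-(k-1) covector lands in `W` -/

theorem core {K : ℕ} (W : Submodule ℝ (Fin n → ℝ)) {m : MV n}
    (hm : m ∈ lambdaK (K + 1) W) {α : MV n} (hα : IsGrade K α) :
    toVec (lhook m α) ∈ W := by
  induction hm using Submodule.span_induction with
  | mem x hx =>
    obtain ⟨w, hw, rfl⟩ := hx
    rw [toVec_lhook]
    rw [show (fun j => ∑ a : Finset (Fin n),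
          α a * (if j ∈ a then 0 else sgn a {j} * simpleCoeff (K + 1) w (insert j a)))
        = ∑ a : Finset (Fin n), α a •
          (fun j => if j ∈ a then (0:ℝ) else sgn a {j} * simpleCoeff (K + 1) w (insert j a))
        from by
      funext j
      rw [Finset.sum_apply]
      exact Finset.sum_congr rfl fun a _ => by rw [Pi.smul_apply, smul_eq_mul]]
    apply Submodule.sum_mem
    intro a _
    rcases eq_or_ne a.card K with ha | ha
    · apply Submodule.smul_mem
      rw [show (fun j => if j ∈ a then (0:ℝ)
            else sgn a {j} * simpleCoeff (K + 1) w (insert j a))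
          = ∑ i : Fin (K + 1),
            ((-1:ℝ) ^ (K + (i : ℕ)) * simpleCoeff K (w ∘ i.succAbove) a) • w i from by
        funext j
        rw [Finset.sum_apply]
        rw [crux ha w j]
        exact Finset.sum_congr rfl fun i _ => by rw [Pi.smul_apply, smul_eq_mul]]
      exact Submodule.sum_mem _ fun i _ => Submodule.smul_mem _ _ (hw i)
    · rw [hα a ha, zero_smul]
      exact Submodule.zero_mem _
  | zero =>
    rw [show toVec (lhook 0 α) = 0 from by rw [lhook_zero_left]; rfl]
    exact Submodule.zero_mem _
  | add x y hx hy ihx ihy =>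
    rw [show toVec (lhook (x + y) α) = toVec (lhook x α) + toVec (lhook y α) from by
      rw [lhook_add_left]; rfl]
    exact Submodule.add_mem _ ihx ihy
  | smul c x hx ih =>
    rw [show toVec (lhook (c • x) α) = c • toVec (lhook x α) from by
      rw [lhook_smul_left]; rfl]
    exact Submodule.smul_mem _ _ ih

/-! ### the linear map `v ↦ v ⌟ α` -/

def lhookLM (α : MV n) : MV n →ₗ[ℝ] MV n where
  toFun v := lhook v α
  map_add' u v := lhook_add_left u v α
  map_smul' c v := lhook_smul_left c v α

/-- the candidate for the span of `v`: all vectors `v ⌟ α`. -/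
def Sspan (K : ℕ) (v : MV n) : Submodule ℝ (Fin n → ℝ) where
  carrier := {u : Fin n → ℝ | ∃ α : MV n, IsGrade K α ∧ u = toVec (lhook v α)}
  zero_mem' := ⟨0, isGrade_zero K, by rw [lhook_zero_right]; rfl⟩
  add_mem' := by
    rintro x y ⟨α, hα, rfl⟩ ⟨β, hβ, rfl⟩
    exact ⟨α + β, isGrade_add hα hβ, by rw [lhook_add_right]; rfl⟩
  smul_mem' := by
    rintro c x ⟨α, hα, rfl⟩
    exact ⟨c • α, isGrade_smul c hα, by rw [lhook_smul_right]; rfl⟩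

theorem mem_Sspan {K : ℕ} {v : MV n} {u : Fin n → ℝ} :
    u ∈ Sspan K v ↔ ∃ α : MV n, IsGrade K α ∧ u = toVec (lhook v α) := Iff.rfl

/-! ### the key computation -/

theorem T_comp {K : ℕ} (b : Module.Basis (Fin n) ℝ (Fin n → ℝ)) (gvec : Fin n → Fin n → ℝ)
    (hdual : ∀ r s : Fin n, ∑ l, gvec r l * b s l = if s = r then 1 else 0)
    {τ₀ : Finset (Fin n)} (hτ₀ : τ₀.card = K) {p : Fin n} (hp : p ∉ τ₀)
    {σ' : Finset (Fin n)} (hσ' : σ'.card = K + 1) :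
    ∃ t : ℝ,
      (∑ l, gvec p l *
        toVec (lhook (simpleCoeff (K + 1) (fun i => b (σ'.orderEmbOfFin hσ' i)))
          (simpleCoeff K (fun i => gvec (τ₀.orderEmbOfFin hτ₀ i)))) l = t)
      ∧ (σ' = insert p τ₀ → t ≠ 0) ∧ (σ' ≠ insert p τ₀ → t = 0) := by
  classical
  set w : Fin (K + 1) → (Fin n → ℝ) := fun i => b (σ'.orderEmbOfFin hσ' i) with hw
  set α : MV n := simpleCoeff K (fun i => gvec (τ₀.orderEmbOfFin hτ₀ i)) with hα
  have hE : ∑ l, gvec p l * toVec (lhook (simpleCoeff (K + 1) w) α) l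
      = ∑ a : Finset (Fin n), α a * ∑ l, gvec p l *
          (if l ∈ a then 0 else sgn a {l} * simpleCoeff (K + 1) w (insert l a)) := by
    rw [toVec_lhook]
    calc ∑ l, gvec p l * ∑ a : Finset (Fin n), α a *
          (if l ∈ a then 0 else sgn a {l} * simpleCoeff (K + 1) w (insert l a))
        = ∑ l, ∑ a : Finset (Fin n), gvec p l * (α a *
            (if l ∈ a then 0 else sgn a {l} * simpleCoeff (K + 1) w (insert l a))) :=
          Finset.sum_congr rfl fun l _ => by rw [Finset.mul_sum]
      _ = ∑ a : Finset (Fin n), ∑ l, gvec p l * (α a *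
            (if l ∈ a then 0 else sgn a {l} * simpleCoeff (K + 1) w (insert l a))) :=
          Finset.sum_comm
      _ = _ := by
          refine Finset.sum_congr rfl fun a _ => ?_
          rw [Finset.mul_sum]
          exact Finset.sum_congr rfl fun l _ => by ring
  have hD : ∀ a : Finset (Fin n), a.card = K →
      ∑ l, gvec p l * (if l ∈ a then 0 else sgn a {l} * simpleCoeff (K + 1) w (insert l a))
        = ∑ i : Fin (K + 1),
            ((-1:ℝ) ^ (K + (i : ℕ)) * simpleCoeff K (w ∘ i.succAbove) a) *
              (if σ'.orderEmbOfFin hσ' i = p then 1 else 0) := by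
    intro a ha
    calc ∑ l, gvec p l * (if l ∈ a then 0 else sgn a {l} * simpleCoeff (K + 1) w (insert l a))
        = ∑ l, ∑ i : Fin (K + 1), gvec p l *
            (((-1:ℝ) ^ (K + (i : ℕ)) * simpleCoeff K (w ∘ i.succAbove) a) * w i l) := by
          refine Finset.sum_congr rfl fun l _ => ?_
          rw [crux ha w l, Finset.mul_sum]
      _ = ∑ i : Fin (K + 1), ∑ l, gvec p l *
            (((-1:ℝ) ^ (K + (i : ℕ)) * simpleCoeff K (w ∘ i.succAbove) a) * w i l) :=
          Finset.sum_comm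
      _ = _ := by
          refine Finset.sum_congr rfl fun i _ => ?_
          rw [← hdual p (σ'.orderEmbOfFin hσ' i), Finset.mul_sum]
          refine Finset.sum_congr rfl fun l _ => ?_
          rw [show w i l = b (σ'.orderEmbOfFin hσ' i) l from by rw [hw]]
          ring
  by_cases hpσ : p ∈ σ'
  · set i₀ : Fin (K + 1) := ((σ'.orderIsoOfFin hσ').symm ⟨p, hpσ⟩) with hi₀def
    have hi₀ : σ'.orderEmbOfFin hσ' i₀ = p :=
      congrArg Subtype.val ((σ'.orderIsoOfFin hσ').apply_symm_apply ⟨p, hpσ⟩)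
    have hτ' : (σ'.erase p).card = K := by
      rw [Finset.card_erase_of_mem hpσ, hσ']
      omega
    have hD2 : ∀ a : Finset (Fin n), a.card = K →
        ∑ l, gvec p l * (if l ∈ a then 0 else sgn a {l} * simpleCoeff (K + 1) w (insert l a))
          = (-1:ℝ) ^ (K + (i₀ : ℕ)) *
              simpleCoeff K (fun r => b ((σ'.erase p).orderEmbOfFin hτ' r)) a := by
      intro a ha
      rw [hD a ha]
      rw [Finset.sum_eq_single i₀]
      · rw [hi₀, if_pos rfl, mul_one]
        have harg : w ∘ i₀.succAbove = fun r => b ((σ'.erase p).orderEmbOfFin hτ' r) := by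
          funext r
          simp only [Function.comp_apply, hw]
          exact congrArg b (orderEmb_erase hσ' hpσ hi₀ rfl hτ' r)
        rw [harg]
      · intro i _ hne
        rw [if_neg, mul_zero]
        intro hcon
        exact hne ((σ'.orderEmbOfFin hσ').injective (by rw [hcon, hi₀]))
      · intro hcon
        exact absurd (Finset.mem_univ i₀) hcon
    refine ⟨(-1:ℝ) ^ (K + (i₀ : ℕ)) * (if τ₀ = σ'.erase p then 1 else 0), ?_, ?_, ?_⟩
    · rw [hE]
      calc ∑ a : Finset (Fin n), α a * ∑ l, gvec p l *
            (if l ∈ a then 0 else sgn a {l} * simpleCoeff (K + 1) w (insert l a))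
          = ∑ a : Finset (Fin n), α a * ((-1:ℝ) ^ (K + (i₀ : ℕ)) *
              simpleCoeff K (fun r => b ((σ'.erase p).orderEmbOfFin hτ' r)) a) := by
            refine Finset.sum_congr rfl fun a _ => ?_
            rcases eq_or_ne a.card K with ha | ha
            · rw [hD2 a ha]
            · rw [hα, simpleCoeff_card_ne _ ha, zero_mul, zero_mul]
        _ = (-1:ℝ) ^ (K + (i₀ : ℕ)) * ∑ a : Finset (Fin n), α a *
              simpleCoeff K (fun r => b ((σ'.erase p).orderEmbOfFin hτ' r)) a := by
            rw [Finset.mul_sum]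
            exact Finset.sum_congr rfl fun a _ => by ring
        _ = (-1:ℝ) ^ (K + (i₀ : ℕ)) * (if τ₀ = σ'.erase p then 1 else 0) := by
            congr 1
            rw [hα]
            rw [show ∑ a : Finset (Fin n),
                simpleCoeff K (fun i => gvec (τ₀.orderEmbOfFin hτ₀ i)) a *
                simpleCoeff K (fun r => b ((σ'.erase p).orderEmbOfFin hτ' r)) a
              = pair (simpleCoeff K (fun i => gvec (τ₀.orderEmbOfFin hτ₀ i)))
                  (simpleCoeff K (fun r => b ((σ'.erase p).orderEmbOfFin hτ' r))) from rfl]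
            rw [pair_simple]
            rw [show (Matrix.of fun i j : Fin K => ∑ l, gvec (τ₀.orderEmbOfFin hτ₀ i) l *
                  b ((σ'.erase p).orderEmbOfFin hτ' j) l)
                = Matrix.of fun i j : Fin K =>
                    if (σ'.erase p).orderEmbOfFin hτ' j = τ₀.orderEmbOfFin hτ₀ i then (1:ℝ)
                    else 0 from by
              ext i j
              rw [Matrix.of_apply, Matrix.of_apply]
              exact hdual _ _]
            exact det_delta hτ₀ hτ'
    · intro heq
      rw [show τ₀ = σ'.erase p from by rw [heq, Finset.erase_insert hp], if_pos rfl, mul_one]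
      exact pow_ne_zero _ (by norm_num)
    · intro hne
      rw [if_neg, mul_zero]
      intro hcon
      exact hne (by rw [hcon, Finset.insert_erase hpσ])
  · refine ⟨0, ?_, fun heq => absurd (heq ▸ Finset.mem_insert_self p τ₀) hpσ, fun _ => rfl⟩
    rw [hE]
    apply Finset.sum_eq_zero
    intro a _
    rcases eq_or_ne a.card K with ha | ha
    · rw [hD a ha]
      rw [Finset.sum_eq_zero, mul_zero]
      intro i _
      rw [if_neg, mul_zero]
      intro hcon
      exact hpσ (hcon ▸ Finset.orderEmbOfFin_mem _ _ _)
    · rw [hα, simpleCoeff_card_ne _ ha, zero_mul]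

/-! ### the main membership -/

theorem main_mem {K : ℕ} {v : MV n} (hv : IsGrade (K + 1) v) :
    v ∈ lambdaK (K + 1) (Sspan K v) := by
  classical
  obtain ⟨C, hC⟩ := Submodule.exists_isCompl (Sspan K v)
  set W : Submodule ℝ (Fin n → ℝ) := Sspan K v with hWdef
  let bW := Module.finBasis ℝ ↥W
  let bC := Module.finBasis ℝ ↥C
  let B0 : Module.Basis _ ℝ (Fin n → ℝ) := (bW.prod bC).map (Submodule.prodEquivOfIsCompl W C hC)
  let eIx := B0.indexEquiv (Pi.basisFun ℝ (Fin n))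
  set b : Module.Basis (Fin n) ℝ (Fin n → ℝ) := B0.reindex eIx with hbdef
  set I : Set (Fin n) := eIx '' (Set.range Sum.inl) with hI
  have hbI : ∀ a, b (eIx (Sum.inl a)) = ↑(bW a) := by
    intro a
    rw [hbdef, Module.Basis.reindex_apply, Equiv.symm_apply_apply, Module.Basis.map_apply]
    rw [show (bW.prod bC) (Sum.inl a) = (bW a, 0) from
      Prod.ext (Module.Basis.prod_apply_inl_fst _ _ _) (Module.Basis.prod_apply_inl_snd _ _ _)]
    rw [Submodule.coe_prodEquivOfIsCompl']
    simp
  have hbW : ∀ r ∈ I, b r ∈ W := by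
    rintro r ⟨x, ⟨a, rfl⟩, rfl⟩
    rw [hbI a]
    exact (bW a).2
  have hWrepr : ∀ x ∈ W, ∀ r, r ∉ I → b.repr x r = 0 := by
    intro x hx r hr
    have hxspan : x ∈ Submodule.span ℝ (⇑b '' I) := by
      have hsub : W.subtype (∑ a, bW.repr ⟨x, hx⟩ a • bW a) = x := by
        rw [Module.Basis.sum_repr]
        rfl
      have hsum : ∑ a, bW.repr ⟨x, hx⟩ a • b (eIx (Sum.inl a)) = x := by
        simp_rw [hbI]
        calc ∑ a, bW.repr ⟨x, hx⟩ a • ((bW a : Fin n → ℝ))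
            = W.subtype (∑ a, bW.repr ⟨x, hx⟩ a • bW a) := by
              rw [map_sum]
              exact (Finset.sum_congr rfl fun a _ => by rw [_root_.map_smul]; rfl).symm
          _ = x := hsub
      rw [← hsum]
      exact Submodule.sum_mem _ fun a _ => Submodule.smul_mem _ _
        (Submodule.subset_span ⟨eIx (Sum.inl a), ⟨Sum.inl a, ⟨a, rfl⟩, rfl⟩, rfl⟩)
    have hsupp := b.mem_span_image.1 hxspan
    by_contra hne
    exact hr (hsupp (Finset.mem_coe.2 (Finsupp.mem_support_iff.2 hne)))
  obtain ⟨c, hc⟩ := mem_span_basis_wedges (k := K + 1) b hv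
  have hbad : ∀ σ₀ : Finset (Fin n), σ₀.card = K + 1 → ¬((↑σ₀ : Set (Fin n)) ⊆ I) →
      c σ₀ = 0 := by
    intro σ₀ hσ₀ hbadI
    obtain ⟨p, hpσ, hpI⟩ := Set.not_subset.1 hbadI
    have hpσ' : p ∈ σ₀ := hpσ
    have hτ₀ : (σ₀.erase p).card = K := by
      rw [Finset.card_erase_of_mem hpσ', hσ₀]
      omega
    have hpτ : p ∉ σ₀.erase p := Finset.notMem_erase p σ₀
    set gvec : Fin n → Fin n → ℝ := fun r l => b.repr (Pi.single l 1) r with hgvec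
    have hdotg : ∀ (r : Fin n) (y : Fin n → ℝ), ∑ l, gvec r l * y l = b.repr y r := by
      intro r y
      have hy : ∑ l, y l • (Pi.single l (1:ℝ) : Fin n → ℝ) = y := by
        rw [show (fun l => y l • (Pi.single l (1:ℝ) : Fin n → ℝ))
            = fun l => (Pi.single l (y l) : Fin n → ℝ) from ?_]
        · exact Finset.univ_sum_single y
        · funext l t
          rw [Pi.smul_apply, Pi.single_apply, Pi.single_apply]
          rw [smul_eq_mul, mul_ite, mul_one, mul_zero]
      calc ∑ l, gvec r l * y l
          = ∑ l, (b.repr (y l • (Pi.single l (1:ℝ) : Fin n → ℝ))) r := by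
            refine Finset.sum_congr rfl fun l _ => ?_
            rw [_root_.map_smul, Finsupp.smul_apply, smul_eq_mul]
            simp only [hgvec]
            exact mul_comm _ _
        _ = (b.repr (∑ l, y l • (Pi.single l (1:ℝ) : Fin n → ℝ))) r := by
            rw [map_sum, Finsupp.coe_finset_sum, Finset.sum_apply]
        _ = b.repr y r := by rw [hy]
    have hdual : ∀ r s : Fin n, ∑ l, gvec r l * b s l = if s = r then 1 else 0 := by
      intro r s
      rw [hdotg r (b s), Module.Basis.repr_self, Finsupp.single_apply]
    set α : MV n := simpleCoeff K (fun i => gvec ((σ₀.erase p).orderEmbOfFin hτ₀ i)) with hαdef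
    have hxW : toVec (lhook v α) ∈ W := ⟨α, fun s hs => simpleCoeff_card_ne _ hs, rfl⟩
    have hxp : b.repr (toVec (lhook v α)) p = 0 := hWrepr _ hxW p hpI
    have hsplit : b.repr (toVec (lhook v α)) p
        = ∑ σ' : Finset (Fin n), c σ' *
            (∑ l, gvec p l * toVec (lhook (bF (K + 1) b σ') α) l) := by
      rw [← hdotg p, ← hc]
      have hlh : lhook (∑ σ : Finset (Fin n), c σ • bF (K + 1) b σ) α
          = ∑ σ : Finset (Fin n), c σ • lhook (bF (K + 1) b σ) α := by
        rw [show lhook (∑ σ : Finset (Fin n), c σ • bF (K + 1) b σ) α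
            = (lhookLM α) (∑ σ : Finset (Fin n), c σ • bF (K + 1) b σ) from rfl, map_sum]
        exact Finset.sum_congr rfl fun σ _ => by rw [_root_.map_smul]; rfl
      rw [hlh]
      calc ∑ l, gvec p l * toVec (∑ σ : Finset (Fin n), c σ • lhook (bF (K + 1) b σ) α) l
          = ∑ l, ∑ σ : Finset (Fin n), gvec p l *
              (c σ * toVec (lhook (bF (K + 1) b σ) α) l) := by
            refine Finset.sum_congr rfl fun l _ => ?_
            rw [show toVec (∑ σ : Finset (Fin n), c σ • lhook (bF (K + 1) b σ) α) l
                = ∑ σ : Finset (Fin n), c σ * toVec (lhook (bF (K + 1) b σ) α) l from by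
              show (∑ σ : Finset (Fin n), c σ • lhook (bF (K + 1) b σ) α) {l} = _
              rw [Finset.sum_apply]
              exact Finset.sum_congr rfl fun σ _ => by rw [Pi.smul_apply, smul_eq_mul]; rfl]
            rw [Finset.mul_sum]
        _ = ∑ σ : Finset (Fin n), ∑ l, gvec p l *
              (c σ * toVec (lhook (bF (K + 1) b σ) α) l) := Finset.sum_comm
        _ = _ := by
            refine Finset.sum_congr rfl fun σ _ => ?_
            rw [Finset.mul_sum]
            exact Finset.sum_congr rfl fun l _ => by ring
    obtain ⟨t₀, ht₀, ht₀ne, _⟩ := T_comp b gvec hdual hτ₀ hpτ (σ' := σ₀) hσ₀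
    have hins : insert p (σ₀.erase p) = σ₀ := Finset.insert_erase hpσ'
    have hsum0 : ∑ σ' : Finset (Fin n), c σ' *
        (∑ l, gvec p l * toVec (lhook (bF (K + 1) b σ') α) l) = c σ₀ * t₀ := by
      rw [Finset.sum_eq_single σ₀]
      · congr 1
        rw [show bF (K + 1) b σ₀
            = simpleCoeff (K + 1) (fun i => b (σ₀.orderEmbOfFin hσ₀ i)) from by
          simp only [bF]; rw [dif_pos hσ₀]]
        exact ht₀
      · intro σ' _ hne
        by_cases hcard : σ'.card = K + 1
        · obtain ⟨t, ht, _, htz⟩ := T_comp b gvec hdual hτ₀ hpτ (σ' := σ') hcard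
          rw [show bF (K + 1) b σ'
              = simpleCoeff (K + 1) (fun i => b (σ'.orderEmbOfFin hcard i)) from by
            simp only [bF]; rw [dif_pos hcard]]
          rw [ht, htz (by rw [hins]; exact hne), mul_zero]
        · rw [show bF (K + 1) b σ' = 0 from by simp only [bF]; rw [dif_neg hcard]]
          rw [lhook_zero_left]
          rw [show toVec (0 : MV n) = 0 from rfl]
          simp
      · intro hcon
        exact absurd (Finset.mem_univ σ₀) hcon
    have hfin : (0:ℝ) = c σ₀ * t₀ := by rw [← hxp]; exact hsplit.trans hsum0
    exact (mul_eq_zero.1 hfin.symm).resolve_right (ht₀ne hins.symm)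
  rw [← hc]
  apply Submodule.sum_mem
  intro σ _
  by_cases hcard : σ.card = K + 1
  · by_cases hgood : (↑σ : Set (Fin n)) ⊆ I
    · apply Submodule.smul_mem
      apply Submodule.subset_span
      refine ⟨fun i => b (σ.orderEmbOfFin hcard i),
        fun i => hbW _ (hgood (Finset.mem_coe.2 (Finset.orderEmbOfFin_mem _ _ _))), ?_⟩
      simp only [bF]; rw [dif_pos hcard]
    · rw [hbad σ hcard hgood, zero_smul]
      exact Submodule.zero_mem _
  · rw [show bF (K + 1) b σ = 0 from by simp only [bF]; rw [dif_neg hcard], smul_zero]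
    exact Submodule.zero_mem _

end MVAux
theorem stmt2 {n k : ℕ} (hk : 1 ≤ k) (v : MV n) (hv : IsGrade k v) :
    (MV.spanCoord k v : Set (Fin n → ℝ)) =
      {u : Fin n → ℝ | ∃ α : MV n, IsGrade (k - 1) α ∧ u = toVec (lhook v α)} := by
  classical
  obtain ⟨K, rfl⟩ : ∃ K, k = K + 1 := ⟨k - 1, by omega⟩
  have hk1 : K + 1 - 1 = K := by omega
  rw [hk1]
  apply Set.Subset.antisymm
  · intro u hu
    have hle : spanCoord (K + 1) v ≤ MVAux.Sspan K v := sInf_le (MVAux.main_mem hv)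
    exact hle hu
  · rintro u ⟨α, hα, rfl⟩
    exact Submodule.mem_sInf.2 fun W' hW' => MVAux.core W' hW' hα
end
end

section
/- Let v be a C¹ k-vectorfield and ω a C¹ h-form on an open set Ω ⊂ ℝⁿ with h ≤ k. Then div(v ⌟ ω) = (−1)^h ((div v) ⌟ ω + v ⌟ dω), where div v := Σ_j (∂v/∂x_j) ⌟ dx_j. -/
open MeasureTheory
noncomputable section

namespace MV

variable {n : ℕ}

set_option linter.dupNamespace false
variable {n : ℕ}

lemma sgn_mul_self (a b : Finset (Fin n)) : sgn a b * sgn a b = 1 := by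
  rw [sgn, ← mul_pow, neg_mul_neg, one_mul, one_pow]

lemma prod_union_right (a b c : Finset (Fin n)) : a ×ˢ (b ∪ c) = a ×ˢ b ∪ a ×ˢ c := by
  ext p; simp [Finset.mem_product, Finset.mem_union]

lemma prod_union_left (a b c : Finset (Fin n)) : (a ∪ b) ×ˢ c = a ×ˢ c ∪ b ×ˢ c := by
  ext p; simp [Finset.mem_product, Finset.mem_union]

lemma sgn_union_right {b c : Finset (Fin n)} (a : Finset (Fin n)) (hbc : Disjoint b c) :
    sgn a (b ∪ c) = sgn a b * sgn a c := by
  unfold sgn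
  rw [← pow_add]
  congr 1
  rw [prod_union_right, Finset.filter_union, Finset.card_union_of_disjoint]
  exact Finset.disjoint_filter_filter (by
    rw [Finset.disjoint_left]
    intro p hp hq
    simp only [Finset.mem_product] at hp hq
    exact (Finset.disjoint_left.mp hbc hp.2 hq.2))

lemma sgn_union_left {a b : Finset (Fin n)} (c : Finset (Fin n)) (hab : Disjoint a b) :
    sgn (a ∪ b) c = sgn a c * sgn b c := by
  unfold sgn
  rw [← pow_add]
  congr 1
  rw [prod_union_left, Finset.filter_union, Finset.card_union_of_disjoint]
  exact Finset.disjoint_filter_filter (by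
    rw [Finset.disjoint_left]
    intro p hp hq
    simp only [Finset.mem_product] at hp hq
    exact (Finset.disjoint_left.mp hab hp.1 hq.1))

lemma sgn_comm {a b : Finset (Fin n)} (hab : Disjoint a b) :
    sgn a b * sgn b a = (-1 : ℝ) ^ (a.card * b.card) := by
  unfold sgn
  rw [← pow_add]
  congr 1
  have h1 : ((b ×ˢ a).filter (fun p => p.2 < p.1)).card
      = ((a ×ˢ b).filter (fun p => p.1 < p.2)).card := by
    apply Finset.card_bij (fun p _ => p.swap)
    · intro p hp
      simp only [Finset.mem_filter, Finset.mem_product] at hp ⊢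
      exact ⟨⟨hp.1.2, hp.1.1⟩, hp.2⟩
    · intro p hp q hq hpq
      exact Prod.ext (congrArg Prod.snd hpq) (congrArg Prod.fst hpq)
    · intro p hp
      refine ⟨p.swap, ?_, rfl⟩
      simp only [Finset.mem_filter, Finset.mem_product] at hp ⊢
      exact ⟨⟨hp.1.2, hp.1.1⟩, hp.2⟩
  rw [h1]
  have h2 : ((a ×ˢ b).filter (fun p => p.1 < p.2))
      = ((a ×ˢ b).filter (fun p => ¬ p.2 < p.1)) := by
    apply Finset.filter_congr
    intro p hp
    simp only [Finset.mem_product] at hp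
    have : p.1 ≠ p.2 := fun e => Finset.disjoint_left.mp hab hp.1 (e ▸ hp.2)
    constructor
    · intro hlt; simp; exact le_of_lt hlt
    · intro hle; simp at hle; exact lt_of_le_of_ne hle this
  rw [h2, Finset.card_filter_add_card_filter_not, Finset.card_product]

lemma sgn_singleton_comm {a : Finset (Fin n)} {j : Fin n} (hj : j ∉ a) :
    sgn a {j} = (-1 : ℝ) ^ a.card * sgn {j} a := by
  have hd : Disjoint a {j} := by simp [Finset.disjoint_singleton_right, hj]
  have h := sgn_comm hd
  simp only [Finset.card_singleton, mul_one] at h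
  calc sgn a {j} = sgn a {j} * (sgn {j} a * sgn {j} a) := by rw [sgn_mul_self, mul_one]
    _ = (sgn a {j} * sgn {j} a) * sgn {j} a := by ring
    _ = (-1 : ℝ) ^ a.card * sgn {j} a := by rw [h]

lemma lhook_dxS (m : MV n) (j : Fin n) (b : Finset (Fin n)) :
    lhook m (dxS {j}) b = if j ∈ b then 0 else sgn {j} b * m ({j} ∪ b) := by
  unfold lhook dxS
  have : ∀ a ∈ bᶜ.powerset, sgn a b * (if a = {j} then (1:ℝ) else 0) * m (a ∪ b)
      = if a = {j} then sgn a b * m (a ∪ b) else 0 := by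
    intro a _; split <;> simp
  rw [Finset.sum_congr rfl this, Finset.sum_ite_eq' bᶜ.powerset ({j} : Finset (Fin n))
    (fun a => sgn a b * m (a ∪ b))]
  have hmem : ({j} : Finset (Fin n)) ∈ bᶜ.powerset ↔ j ∉ b := by
    simp [Finset.mem_powerset, Finset.singleton_subset_iff]
  by_cases hj : j ∈ b
  · simp [hmem, hj]
  · simp [hmem, hj]

lemma wedge_dxS (β : MV n) (j : Fin n) (s : Finset (Fin n)) :
    wedge (dxS {j}) β s = if j ∈ s then sgn {j} (s \ {j}) * β (s \ {j}) else 0 := by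
  unfold wedge dxS
  have : ∀ a ∈ s.powerset, sgn a (s \ a) * (if a = {j} then (1:ℝ) else 0) * β (s \ a)
      = if a = {j} then sgn a (s \ a) * β (s \ a) else 0 := by
    intro a _; split <;> simp
  rw [Finset.sum_congr rfl this, Finset.sum_ite_eq' s.powerset ({j} : Finset (Fin n))
    (fun a => sgn a (s \ a) * β (s \ a))]
  have hmem : ({j} : Finset (Fin n)) ∈ s.powerset ↔ j ∈ s := by
    simp [Finset.mem_powerset, Finset.singleton_subset_iff]
  by_cases hj : j ∈ s
  · simp [hmem, hj]
  · simp [hmem, hj]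
lemma pd_apply {f : (Fin n → ℝ) → MV n} {x : Fin n → ℝ}
    (hf : ∀ s, DifferentiableAt ℝ (fun y => f y s) x) (j : Fin n) (b : Finset (Fin n)) :
    pd f j x b = fderiv ℝ (fun y => f y b) x (Pi.single j 1) := by
  unfold pd; rw [fderiv_pi hf]; rfl

lemma isGrade_pd {h : ℕ} {ω : (Fin n → ℝ) → MV n} {x : Fin n → ℝ}
    (hg : ∀ y, IsGrade h (ω y)) (hd : DifferentiableAt ℝ ω x) (j : Fin n) :
    IsGrade h (pd ω j x) := by
  intro s hs
  rw [pd_apply (fun s => (differentiableAt_pi.mp hd) s) j s]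
  have : (fun y => ω y s) = fun _ => (0:ℝ) := funext fun y => hg y s hs
  rw [this]
  simp

lemma pd_lhook {v ω : (Fin n → ℝ) → MV n} {x : Fin n → ℝ}
    (hv : DifferentiableAt ℝ v x) (hω : DifferentiableAt ℝ ω x) (j : Fin n) :
    pd (fun y => lhook (v y) (ω y)) j x
      = lhook (pd v j x) (ω x) + lhook (v x) (pd ω j x) := by
  have hvs : ∀ s, DifferentiableAt ℝ (fun y => v y s) x := fun s => (differentiableAt_pi.mp hv) s
  have hωs : ∀ s, DifferentiableAt ℝ (fun y => ω y s) x := fun s => (differentiableAt_pi.mp hω) s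
  funext b
  have hcoord : ∀ s, DifferentiableAt ℝ (fun y => lhook (v y) (ω y) s) x := by
    intro s
    have : (fun y => lhook (v y) (ω y) s)
        = fun y => ∑ a ∈ sᶜ.powerset, sgn a s * ω y a * v y (a ∪ s) := rfl
    rw [this]
    exact DifferentiableAt.fun_sum fun a _ => ((differentiableAt_const _).mul (hωs a)).mul (hvs (a ∪ s))
  rw [Pi.add_apply, pd_apply hcoord j b]
  have hb : (fun y => lhook (v y) (ω y) b)
      = fun y => ∑ a ∈ bᶜ.powerset, sgn a b * ω y a * v y (a ∪ b) := rfl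
  rw [hb, fderiv_fun_sum (fun a _ => (show DifferentiableAt ℝ (fun y => sgn a b * ω y a * v y (a ∪ b)) x from ((differentiableAt_const _).mul (hωs a)).mul (hvs (a ∪ b)))),
    ContinuousLinearMap.sum_apply]
  have hterm : ∀ a ∈ bᶜ.powerset,
      fderiv ℝ (fun y => sgn a b * ω y a * v y (a ∪ b)) x (Pi.single j 1)
        = sgn a b * ω x a * pd v j x (a ∪ b) + sgn a b * pd ω j x a * v x (a ∪ b) := by
    intro a _
    rw [fderiv_fun_mul ((differentiableAt_const _).fun_mul (hωs a)) (hvs (a ∪ b)),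
      fderiv_const_mul (hωs a), pd_apply hvs j (a ∪ b), pd_apply hωs j a]
    simp only [ContinuousLinearMap.add_apply, ContinuousLinearMap.smul_apply, smul_eq_mul,
      Pi.smul_apply]
    ring
  rw [Finset.sum_congr rfl hterm, Finset.sum_add_distrib]
  rfl
lemma sum_powerset_eq_sum_ite (s : Finset (Fin n)) (f : Finset (Fin n) → ℝ) :
    ∑ a ∈ s.powerset, f a = ∑ a : Finset (Fin n), (if a ⊆ s then f a else 0) := by
  rw [← Finset.sum_filter]
  apply Finset.sum_congr _ (fun _ _ => rfl)
  ext a; simp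

lemma keyA {h : ℕ} (W : MV n) (hW : IsGrade h W) (Fj : MV n) (j : Fin n)
    (a b : Finset (Fin n)) :
    (if j ∈ b then 0 else if a ⊆ ({j} ∪ b)ᶜ then
        sgn {j} b * (sgn a ({j} ∪ b) * W a * Fj (a ∪ ({j} ∪ b))) else 0)
    = (-1:ℝ)^h * (if a ⊆ bᶜ then
        sgn a b * W a * (if j ∈ a ∪ b then 0 else sgn {j} (a ∪ b) * Fj ({j} ∪ (a ∪ b))) else 0) := by
  by_cases hjb : j ∈ b
  · rw [if_pos hjb]
    have : j ∈ a ∪ b := Finset.mem_union_right a hjb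
    rw [if_pos this]
    by_cases hsub : a ⊆ bᶜ
    · rw [if_pos hsub]; ring
    · rw [if_neg hsub]; ring
  · rw [if_neg hjb]
    by_cases hsub : a ⊆ bᶜ
    · by_cases hja : j ∈ a
      · have h1 : ¬ a ⊆ ({j} ∪ b)ᶜ := by
          intro hc
          have := hc hja
          simp [Finset.mem_compl, Finset.mem_union] at this
        rw [if_neg h1, if_pos hsub, if_pos (Finset.mem_union_left b hja)]
        ring
      · have h1 : a ⊆ ({j} ∪ b)ᶜ := by
          intro x hx
          simp only [Finset.mem_compl, Finset.mem_union, Finset.mem_singleton]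
          push_neg
          exact ⟨fun e => hja (e ▸ hx), fun hb => Finset.mem_compl.mp (hsub hx) hb⟩
        have hju : j ∉ a ∪ b := by simp [Finset.mem_union, hja, hjb]
        rw [if_pos h1, if_pos hsub, if_neg hju]
        by_cases hcard : a.card = h
        · have hd1 : Disjoint ({j} : Finset (Fin n)) b := by
            simp [Finset.disjoint_singleton_left, hjb]
          have hd2 : Disjoint a b := by
            rw [Finset.disjoint_left]; intro x hx hxb
            exact Finset.mem_compl.mp (hsub hx) hxb
          rw [Finset.union_left_comm, sgn_union_right a hd1,
            sgn_union_right ({j} : Finset (Fin n)) hd2, sgn_singleton_comm hja, hcard]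
          ring
        · rw [hW a hcard]; ring
    · have h1 : ¬ a ⊆ ({j} ∪ b)ᶜ := by
        intro hc
        apply hsub
        intro x hx
        have := hc hx
        simp only [Finset.mem_compl, Finset.mem_union, Finset.mem_singleton] at this
        exact Finset.mem_compl.mpr (fun hb => this (Or.inr hb))
      rw [if_neg h1, if_neg hsub]; ring

lemma claimA {h : ℕ} (W : MV n) (hW : IsGrade h W) (F : Fin n → MV n) (b : Finset (Fin n)) :
    ∑ j, lhook (lhook (F j) W) (dxS {j}) b
      = (-1:ℝ)^h * lhook (∑ j, lhook (F j) (dxS {j})) W b := by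
  have lhs : ∀ j : Fin n, lhook (lhook (F j) W) (dxS {j}) b
      = ∑ a : Finset (Fin n), (if j ∈ b then 0 else if a ⊆ ({j} ∪ b)ᶜ then
          sgn {j} b * (sgn a ({j} ∪ b) * W a * F j (a ∪ ({j} ∪ b))) else 0) := by
    intro j
    rw [lhook_dxS]
    by_cases hjb : j ∈ b
    · simp [hjb]
    · rw [if_neg hjb]
      rw [show lhook (F j) W ({j} ∪ b) = ∑ a ∈ (({j} ∪ b)ᶜ).powerset,
            sgn a ({j} ∪ b) * W a * F j (a ∪ ({j} ∪ b)) from rfl]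
      rw [sum_powerset_eq_sum_ite, Finset.mul_sum]
      apply Finset.sum_congr rfl
      intro a _
      rw [if_neg hjb, mul_ite, mul_zero]
  have rhs : lhook (∑ j, lhook (F j) (dxS {j})) W b
      = ∑ a : Finset (Fin n), ∑ j : Fin n, (if a ⊆ bᶜ then
          sgn a b * W a * (if j ∈ a ∪ b then 0 else sgn {j} (a ∪ b) * F j ({j} ∪ (a ∪ b)))
        else 0) := by
    rw [show lhook (∑ j, lhook (F j) (dxS {j})) W b = ∑ a ∈ bᶜ.powerset,
          sgn a b * W a * (∑ j, lhook (F j) (dxS {j})) (a ∪ b) from rfl]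
    rw [sum_powerset_eq_sum_ite]
    apply Finset.sum_congr rfl
    intro a _
    by_cases hsub : a ⊆ bᶜ
    · rw [if_pos hsub]
      rw [Finset.sum_apply, Finset.mul_sum]
      apply Finset.sum_congr rfl
      intro j _
      rw [if_pos hsub, lhook_dxS]
    · simp [hsub]
  calc ∑ j, lhook (lhook (F j) W) (dxS {j}) b
      = ∑ j : Fin n, ∑ a : Finset (Fin n), (-1:ℝ)^h * (if a ⊆ bᶜ then
          sgn a b * W a * (if j ∈ a ∪ b then 0 else sgn {j} (a ∪ b) * F j ({j} ∪ (a ∪ b))) else 0) := by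
        apply Finset.sum_congr rfl; intro j _
        rw [lhs j]
        apply Finset.sum_congr rfl; intro a _
        exact keyA W hW (F j) j a b
    _ = (-1:ℝ)^h * lhook (∑ j, lhook (F j) (dxS {j})) W b := by
        rw [rhs]
        simp only [Finset.mul_sum]
        exact Finset.sum_comm
lemma claimB {h : ℕ} (V : MV n) (A : Fin n → MV n) (hA : ∀ j, IsGrade h (A j))
    (b : Finset (Fin n)) :
    ∑ j, lhook (lhook V (A j)) (dxS {j}) b
      = (-1:ℝ)^h * lhook V (∑ j, wedge (dxS {j}) (A j)) b := by
  have rhs : lhook V (∑ j, wedge (dxS {j}) (A j)) b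
      = ∑ j : Fin n, ∑ c ∈ bᶜ.powerset.filter (fun c => j ∈ c),
          sgn c b * (sgn {j} (c \ {j}) * A j (c \ {j})) * V (c ∪ b) := by
    rw [show lhook V (∑ j, wedge (dxS {j}) (A j)) b = ∑ c ∈ bᶜ.powerset,
          sgn c b * (∑ j, wedge (dxS {j}) (A j)) c * V (c ∪ b) from rfl]
    have step : ∀ c ∈ bᶜ.powerset,
        sgn c b * (∑ j, wedge (dxS {j}) (A j)) c * V (c ∪ b)
          = ∑ j : Fin n, (if j ∈ c then
              sgn c b * (sgn {j} (c \ {j}) * A j (c \ {j})) * V (c ∪ b) else 0) := by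
      intro c _
      rw [Finset.sum_apply, Finset.mul_sum, Finset.sum_mul]
      apply Finset.sum_congr rfl
      intro j _
      rw [wedge_dxS, mul_ite, mul_zero, ite_mul, zero_mul]
    rw [Finset.sum_congr rfl step, Finset.sum_comm]
    apply Finset.sum_congr rfl
    intro j _
    rw [Finset.sum_filter]
  rw [rhs, Finset.mul_sum]
  apply Finset.sum_congr rfl
  intro j _
  rw [lhook_dxS]
  by_cases hjb : j ∈ b
  · rw [if_pos hjb]
    have : bᶜ.powerset.filter (fun c => j ∈ c) = ∅ := by
      rw [Finset.filter_eq_empty_iff]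
      intro c hc hjc
      exact (Finset.mem_compl.mp ((Finset.mem_powerset.mp hc) hjc)) hjb
    rw [this, Finset.sum_empty, mul_zero]
  · rw [if_neg hjb]
    rw [show lhook V (A j) ({j} ∪ b) = ∑ a ∈ (({j} ∪ b)ᶜ).powerset,
          sgn a ({j} ∪ b) * A j a * V (a ∪ ({j} ∪ b)) from rfl]
    rw [Finset.mul_sum, Finset.mul_sum]
    apply Finset.sum_nbij' (fun a => insert j a) (fun c => c.erase j)
    · intro a ha
      rw [Finset.mem_powerset] at ha
      have hja : j ∉ a := fun hj => by
        have := ha hj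
        simp [Finset.mem_compl, Finset.mem_union] at this
      rw [Finset.mem_filter, Finset.mem_powerset]
      refine ⟨?_, Finset.mem_insert_self j a⟩
      intro x hx
      rcases Finset.mem_insert.mp hx with rfl | hxa
      · exact Finset.mem_compl.mpr hjb
      · have := ha hxa
        simp only [Finset.mem_compl, Finset.mem_union, Finset.mem_singleton] at this
        push_neg at this
        exact Finset.mem_compl.mpr this.2
    · intro c hc
      rw [Finset.mem_filter, Finset.mem_powerset] at hc
      rw [Finset.mem_powerset]
      intro x hx
      rw [Finset.mem_erase] at hx
      simp only [Finset.mem_compl, Finset.mem_union, Finset.mem_singleton]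
      push_neg
      exact ⟨hx.1, Finset.mem_compl.mp (hc.1 hx.2)⟩
    · intro a ha
      rw [Finset.mem_powerset] at ha
      have hja : j ∉ a := fun hj => by
        have := ha hj
        simp [Finset.mem_compl, Finset.mem_union] at this
      exact Finset.erase_insert hja
    · intro c hc
      rw [Finset.mem_filter] at hc
      exact Finset.insert_erase hc.2
    · intro a ha
      rw [Finset.mem_powerset] at ha
      have hja : j ∉ a := fun hj => by
        have := ha hj
        simp [Finset.mem_compl, Finset.mem_union] at this
      have hd2 : Disjoint a b := by
        rw [Finset.disjoint_left]; intro x hx hxb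
        have := ha hx
        simp only [Finset.mem_compl, Finset.mem_union, Finset.mem_singleton] at this
        exact this (Or.inr hxb)
      have hd1 : Disjoint ({j} : Finset (Fin n)) b := by
        simp [Finset.disjoint_singleton_left, hjb]
      have hdja : Disjoint ({j} : Finset (Fin n)) a := by
        simp [Finset.disjoint_singleton_left, hja]
      have e1 : insert j a \ {j} = a := by
        rw [← Finset.erase_eq]
        exact Finset.erase_insert hja
      have e2 : insert j a ∪ b = {j} ∪ (a ∪ b) := by
        rw [Finset.insert_eq, Finset.union_assoc]
      rw [e1, e2, Finset.insert_eq, sgn_union_left b hdja, Finset.union_left_comm]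
      by_cases hcard : a.card = h
      · rw [sgn_union_right a hd1, sgn_singleton_comm hja, hcard]
        ring
      · rw [hA j a hcard]
        ring
lemma lhook_add_left (m m' α : MV n) :
    lhook (m + m') α = lhook m α + lhook m' α := by
  funext b
  rw [Pi.add_apply]
  unfold lhook
  rw [← Finset.sum_add_distrib]
  apply Finset.sum_congr rfl
  intro a _
  rw [Pi.add_apply]
  ring

end MV

open MV

theorem stmt10 {n k h : ℕ} (hhk : h ≤ k) (Ω : Set (Fin n → ℝ)) (hΩ : IsOpen Ω)
    (v ω : (Fin n → ℝ) → MV n)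
    (hv : ContDiffOn ℝ 1 v Ω) (hω : ContDiffOn ℝ 1 ω Ω)
    (hgv : ∀ x, IsGrade k (v x)) (hgω : ∀ x, IsGrade h (ω x)) :
    ∀ x ∈ Ω, dvg (fun y => lhook (v y) (ω y)) x =
      (-1 : ℝ) ^ h • (lhook (dvg v x) (ω x) + lhook (v x) (extd ω x)) := by

  intro x hx
  have hvd : DifferentiableAt ℝ v x :=
    (hv.differentiableOn one_ne_zero).differentiableAt (hΩ.mem_nhds hx)
  have hωd : DifferentiableAt ℝ ω x :=
    (hω.differentiableOn one_ne_zero).differentiableAt (hΩ.mem_nhds hx)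
  funext b
  calc dvg (fun y => lhook (v y) (ω y)) x b
      = ∑ j, lhook (pd (fun y => lhook (v y) (ω y)) j x) (dxS {j}) b := by
        unfold dvg; exact Finset.sum_apply _ _ _
    _ = ∑ j, (lhook (lhook (pd v j x) (ω x)) (dxS {j}) b
          + lhook (lhook (v x) (pd ω j x)) (dxS {j}) b) := by
        apply Finset.sum_congr rfl; intro j _
        rw [pd_lhook hvd hωd j, lhook_add_left, Pi.add_apply]
    _ = ∑ j, lhook (lhook (pd v j x) (ω x)) (dxS {j}) b
        + ∑ j, lhook (lhook (v x) (pd ω j x)) (dxS {j}) b := Finset.sum_add_distrib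
    _ = (-1:ℝ)^h * lhook (∑ j, lhook (pd v j x) (dxS {j})) (ω x) b
        + (-1:ℝ)^h * lhook (v x) (∑ j, wedge (dxS {j}) (pd ω j x)) b := by
        rw [claimA (ω x) (hgω x) (fun j => pd v j x) b,
          claimB (v x) (fun j => pd ω j x) (fun j => isGrade_pd hgω hωd j) b]
    _ = ((-1:ℝ)^h • (lhook (dvg v x) (ω x) + lhook (v x) (extd ω x))) b := by
        rw [Pi.smul_apply, Pi.add_apply, smul_eq_mul, mul_add]
        rfl
end
end
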